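/- Fix reals m, L, α, β, η with 0 < m ≤ L. Suppose that for every q ∈ [m, L] the quadratic z² + (α(η+1)q − β − 1)z + (β − αηq) has both roots of modulus strictly less than 1. Then 0 < α < 4/L, −2/(L−m) < αη < 2/(L−m) (when m < L), and: if αη ≥ 0 then −1 + L(αη) < β < 1 + m(αη), while if αη < 0 then −1 + m(αη) < β < 1 + L(αη). -/

import Mathlib

lemma jury_aux (b c : ℝ)
    (h : ∀ z : ℂ, z ^ 2 + ((b : ℝ) : ℂ) * z + ((c : ℝ) : ℂ) = 0 → ‖z‖ < 1) :
    0 < 1 + b + c ∧ 0 < 1 - b + c ∧ |c| < 1 := by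
  obtain ⟨w, hw⟩ := IsAlgClosed.exists_pow_nat_eq ((b : ℂ) ^ 2 - 4 * (c : ℂ)) zero_lt_two
  have key : ∀ z : ℂ, z ^ 2 + (b : ℂ) * z + (c : ℂ) =
      (z - (-(b : ℂ) + w) / 2) * (z - (-(b : ℂ) - w) / 2) := by
    intro z
    linear_combination ((1 : ℂ) / 4) * hw
  set r : ℂ := (-(b : ℂ) + w) / 2 with hrdef
  set s : ℂ := (-(b : ℂ) - w) / 2 with hsdef
  have hr : ‖r‖ < 1 := h r (by rw [key r]; ring)
  have hs : ‖s‖ < 1 := h s (by rw [key s]; ring)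
  have hsum : r + s = -(b : ℂ) := by rw [hrdef, hsdef]; ring
  have hprod : r * s = (c : ℂ) := by
    rw [hrdef, hsdef]
    field_simp
    linear_combination -hw
  have hsre : r.re + s.re = -b := by
    have := congrArg Complex.re hsum; simpa using this
  have hsim : r.im + s.im = 0 := by
    have := congrArg Complex.im hsum; simpa using this
  have hpre : r.re * s.re - r.im * s.im = c := by
    have := congrArg Complex.re hprod; simpa [Complex.mul_re] using this
  have hpim : r.re * s.im + r.im * s.re = 0 := by
    have := congrArg Complex.im hprod; simpa [Complex.mul_im] using this
  have hnr : r.re * r.re + r.im * r.im < 1 := by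
    have h1 : ‖r‖ * ‖r‖ = r.re * r.re + r.im * r.im := by
      rw [← sq, ← Complex.normSq_eq_norm_sq, Complex.normSq_apply]
    nlinarith [norm_nonneg r]
  have hns : s.re * s.re + s.im * s.im < 1 := by
    have h1 : ‖s‖ * ‖s‖ = s.re * s.re + s.im * s.im := by
      rw [← sq, ← Complex.normSq_eq_norm_sq, Complex.normSq_apply]
    nlinarith [norm_nonneg s]
  have him : s.im = -r.im := by linarith
  rw [him] at hpre hpim hns
  refine ⟨?_, ?_, abs_lt.2 ⟨?_, ?_⟩⟩
  · -- 0 < 1 + b + c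
    rcases eq_or_ne r.im 0 with hy | hy
    · rw [hy] at hpre hpim hnr hns
      have hx1 : r.re < 1 := by nlinarith
      have hu1 : s.re < 1 := by nlinarith
      nlinarith [mul_pos (by linarith : (0:ℝ) < 1 - r.re) (by linarith : (0:ℝ) < 1 - s.re)]
    · have hux : s.re = r.re := by
        have : r.im * (s.re - r.re) = 0 := by linarith [hpim]
        rcases mul_eq_zero.1 this with h' | h'
        · exact absurd h' hy
        · linarith
      rw [hux] at hpre hsre
      nlinarith [sq_nonneg (1 - r.re), sq_nonneg r.im, hy, mul_self_pos.2 hy]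
  · -- 0 < 1 - b + c
    rcases eq_or_ne r.im 0 with hy | hy
    · rw [hy] at hpre hpim hnr hns
      have hx1 : -1 < r.re := by nlinarith
      have hu1 : -1 < s.re := by nlinarith
      nlinarith [mul_pos (by linarith : (0:ℝ) < 1 + r.re) (by linarith : (0:ℝ) < 1 + s.re)]
    · have hux : s.re = r.re := by
        have : r.im * (s.re - r.re) = 0 := by linarith [hpim]
        rcases mul_eq_zero.1 this with h' | h'
        · exact absurd h' hy
        · linarith
      rw [hux] at hpre hsre
      nlinarith [sq_nonneg (1 + r.re), mul_self_pos.2 hy]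
  · -- -1 < c
    nlinarith [sq_nonneg (r.re + s.re), sq_nonneg r.im]
  · -- c < 1
    nlinarith [sq_nonneg (r.re - s.re), sq_nonneg r.im]

theorem stmt_5 (m L α β η : ℝ) (hm : 0 < m) (hmL : m ≤ L)
    (hroots : ∀ q : ℝ, m ≤ q → q ≤ L → ∀ z : ℂ,
      z ^ 2 + ((α * (η + 1) * q - β - 1 : ℝ) : ℂ) * z + ((β - α * η * q : ℝ) : ℂ) = 0 →
      ‖z‖ < 1) :
    (0 < α ∧ α < 4 / L) ∧
    (m < L → -2 / (L - m) < α * η ∧ α * η < 2 / (L - m)) ∧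
    (0 ≤ α * η → -1 + L * (α * η) < β ∧ β < 1 + m * (α * η)) ∧
    (α * η < 0 → -1 + m * (α * η) < β ∧ β < 1 + L * (α * η)) := by
  have hL : 0 < L := lt_of_lt_of_le hm hmL
  obtain ⟨hm1, hm2, hm3⟩ := jury_aux (α * (η + 1) * m - β - 1) (β - α * η * m)
    (hroots m le_rfl hmL)
  obtain ⟨hL1, hL2, hL3⟩ := jury_aux (α * (η + 1) * L - β - 1) (β - α * η * L)
    (hroots L hmL le_rfl)
  rw [abs_lt] at hm3 hL3
  have hαm : 0 < α * m := by nlinarith [hm1]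
  have hα : 0 < α := by
    rcases lt_or_ge 0 α with h | h
    · exact h
    · nlinarith
  refine ⟨⟨hα, ?_⟩, ?_, fun _ => ⟨?_, ?_⟩, fun _ => ⟨?_, ?_⟩⟩
  · rw [lt_div_iff₀ hL]
    nlinarith [hL2, hL3.2]
  · intro hlt
    have hd : 0 < L - m := by linarith
    constructor
    · rw [div_lt_iff₀ hd]
      nlinarith [hm3.1, hL3.2]
    · rw [lt_div_iff₀ hd]
      nlinarith [hm3.2, hL3.1]
  · nlinarith [hL3.1]
  · nlinarith [hm3.2]
  · nlinarith [hm3.1]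
  · nlinarith [hL3.2]
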